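/- If X = {x₁, x₂, ..., xₘ} is a totally symmetric subset of a group G with m ≥ 2, then the set X' = {x₁x₂⁻¹, x₁x₃⁻¹, ..., x₁xₘ⁻¹} is a totally symmetric subset of G of cardinality m−1 (provided its listed elements are distinct). -/

import Mathlib

/-- A subset `X` of a group `G` is *totally symmetric* if its elements commute
pairwise and every permutation of `X` is realized by conjugation by an element
of `G`. -/
def IsTotallySymmetric {G : Type*} [Group G] (X : Set G) : Prop :=
  (∀ x ∈ X, ∀ y ∈ X, x * y = y * x) ∧
  ∀ σ : Equiv.Perm X, ∃ g : G, ∀ x : X, g * (x : G) * g⁻¹ = (σ x : G)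

/-- If `X = {x₀, x₁, …, x_m}` is a totally symmetric subset of `G` (of
cardinality `m + 1 ≥ 2`), then `X' = {x₀x₁⁻¹, …, x₀x_m⁻¹}` is a totally
symmetric subset of cardinality `m`, provided its listed elements are
distinct. -/
theorem stmt_2 {G : Type*} [Group G] (m : ℕ) (hm : 1 ≤ m)
    (x : Fin (m + 1) → G) (hxinj : Function.Injective x)
    (hX : IsTotallySymmetric (Set.range x))
    (hdist : Function.Injective (fun j : Fin m => x 0 * (x j.succ)⁻¹)) :
    IsTotallySymmetric (Set.range (fun j : Fin m => x 0 * (x j.succ)⁻¹)) ∧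
      (Set.range (fun j : Fin m => x 0 * (x j.succ)⁻¹)).ncard = m := by
  set f : Fin m → G := fun j : Fin m => x 0 * (x j.succ)⁻¹ with hf
  have hc : ∀ i j : Fin (m + 1), Commute (x i) (x j) := fun i j =>
    hX.1 _ ⟨i, rfl⟩ _ ⟨j, rfl⟩
  refine ⟨⟨?_, ?_⟩, ?_⟩
  · rintro _ ⟨i, rfl⟩ _ ⟨j, rfl⟩
    exact (((hc 0 0).mul_right (hc 0 j.succ).inv_right).mul_left
      (((hc 0 i.succ).symm.inv_left.mul_right
        (hc i.succ j.succ).inv_left.inv_right) : Commute _ _))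
  · intro σ
    -- transport σ to a permutation of Fin m
    let e' : Fin m ≃ Set.range f := Equiv.ofInjective f hdist
    let τ : Equiv.Perm (Fin m) := (e'.permCongr).symm σ
    -- extend to a permutation of Fin (m+1) fixing 0
    let τ' : Equiv.Perm (Fin (m + 1)) :=
      ((finSuccEquiv m).symm).permCongr τ.optionCongr
    have hτ'0 : τ' 0 = 0 := by
      simp [τ', Equiv.permCongr_apply]
    have hτ's : ∀ j : Fin m, τ' j.succ = (τ j).succ := by
      intro j
      simp [τ', Equiv.permCongr_apply]
    -- lift to a permutation of X
    let e : Fin (m + 1) ≃ Set.range x := Equiv.ofInjective x hxinj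
    obtain ⟨g, hg⟩ := hX.2 (e.permCongr τ')
    have hgx : ∀ i : Fin (m + 1), g * x i * g⁻¹ = x (τ' i) := by
      intro i
      have := hg (e i)
      simpa [e, Equiv.permCongr_apply, Equiv.ofInjective] using this
    refine ⟨g, ?_⟩
    rintro ⟨_, i, rfl⟩
    have hσ : σ ⟨f i, ⟨i, rfl⟩⟩ = ⟨f (τ i), ⟨τ i, rfl⟩⟩ := by
      have : σ (e' i) = e' (τ i) := by
        simp [τ, Equiv.permCongr_apply]
      exact this
    rw [hσ]
    show g * f i * g⁻¹ = f (τ i)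
    have h0 := hgx 0
    have hs := hgx i.succ
    rw [hτ'0] at h0
    rw [hτ's] at hs
    calc g * f i * g⁻¹ = (g * x 0 * g⁻¹) * (g * x i.succ * g⁻¹)⁻¹ := by
          simp [hf]; group
      _ = f (τ i) := by rw [h0, hs]
  · rw [← Nat.card_coe_set_eq, Nat.card_range_of_injective hdist,
      Nat.card_eq_fintype_card, Fintype.card_fin]
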